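/- Let X be a Banach space, T ∈ L(X) a commutator, and B ∈ L(X) an element of the intersection of all maximal (closed, proper, two-sided) ideals of L(X). Assume X has property P: an operator is a non-commutator if and only if it equals λI + S with λ ≠ 0 and S in some proper closed ideal. Then T + B is a commutator. -/
import Mathlib


variable {X : Type*} [NormedAddCommGroup X] [NormedSpace ℂ X] [CompleteSpace X]

/-- `T` is a commutator of bounded operators. -/
def IsCommutatorOp (T : X →L[ℂ] X) : Prop := ∃ A B : X →L[ℂ] X, T = A * B - B * A

/-- A maximal ideal of `L(X)`: a proper closed two-sided ideal maximal among such. -/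
def IsMaximalOpIdeal (J : TwoSidedIdeal (X →L[ℂ] X)) : Prop :=
  J ≠ ⊤ ∧ IsClosed (J : Set (X →L[ℂ] X)) ∧
    ∀ J' : TwoSidedIdeal (X →L[ℂ] X), J' ≠ ⊤ → IsClosed (J' : Set (X →L[ℂ] X)) →
      J ≤ J' → J' = J

/-- Property P: an operator fails to be a commutator iff it is `λI + S` with `λ ≠ 0` and `S`
in some proper closed two-sided ideal of `L(X)`. -/
def PropertyP (X : Type*) [NormedAddCommGroup X] [NormedSpace ℂ X] [CompleteSpace X] : Prop :=
  ∀ T : X →L[ℂ] X, ¬ IsCommutatorOp T ↔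
    ∃ lam : ℂ, lam ≠ 0 ∧ ∃ J : TwoSidedIdeal (X →L[ℂ] X), J ≠ ⊤ ∧
      IsClosed (J : Set (X →L[ℂ] X)) ∧ T - lam • (1 : X →L[ℂ] X) ∈ J

/-- If `X` has property P, every proper closed ideal of `L(X)` lies in a maximal one, `T` is a
commutator and `B` lies in every maximal ideal, then `T + B` is a commutator. -/
theorem commutator_add_radical (hP : PropertyP X)
    (hmax : ∀ J : TwoSidedIdeal (X →L[ℂ] X), J ≠ ⊤ → IsClosed (J : Set (X →L[ℂ] X)) →
      ∃ M : TwoSidedIdeal (X →L[ℂ] X), IsMaximalOpIdeal M ∧ J ≤ M)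
    (T B : X →L[ℂ] X) (hT : IsCommutatorOp T)
    (hB : ∀ M : TwoSidedIdeal (X →L[ℂ] X), IsMaximalOpIdeal M → B ∈ M) :
    IsCommutatorOp (T + B) := by
  by_contra h
  obtain ⟨lam, hlam, J, hJtop, hJcl, hS⟩ := (hP (T + B)).mp h
  obtain ⟨M, hM, hJM⟩ := hmax J hJtop hJcl
  have hBM := hB M hM
  have hTM : T - lam • (1 : X →L[ℂ] X) ∈ M := by
    have h1 : T + B - lam • (1 : X →L[ℂ] X) ∈ M := hJM hS
    have := M.sub_mem h1 hBM
    convert this using 1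
    abel
  exact (hP T).mpr ⟨lam, hlam, M, hM.1, hM.2.1, hTM⟩ hT
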